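/- Let u, v, w be 2×2 complex matrices satisfying the bracket relations ⁅u,v⁆ = w, ⁅v,w⁆ = u and ⁅w,u⁆ = v (where ⁅A,B⁆ = A·B − B·A). Then for all real numbers α and β: exp(α•u) · exp(β•v) = exp(β•(cos α • v + sin α • w)) · exp(α•u). -/

import Mathlib

open scoped Matrix
open NormedSpace

attribute [local instance] Matrix.linftyOpNormedAddCommGroup Matrix.linftyOpNormedRing
  Matrix.linftyOpNormedAlgebra

noncomputable section

namespace Su2ExpConjAux

abbrev A := Matrix (Fin 2) (Fin 2) ℂ

lemma hasDerivAt_expReal (u : A) (t : ℝ) :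
    HasDerivAt (fun s : ℝ => exp ((s : ℂ) • u)) (exp ((t : ℂ) • u) * u) t := by
  have h1 : HasDerivAt (fun z : ℂ => exp (z • u)) (exp ((t : ℂ) • u) * u) (t : ℂ) :=
    hasDerivAt_exp_smul_const u (t : ℂ)
  have h2 : HasDerivAt (fun s : ℝ => (s : ℂ)) 1 t := by
    simpa using (hasDerivAt_id t).ofReal_comp
  have h3 := h1.scomp t h2
  rw [one_smul] at h3
  exact h3

lemma exp_comm_self (u : A) (t : ℝ) :
    exp ((t : ℂ) • u) * u = u * exp ((t : ℂ) • u) :=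
  (((Commute.refl u).smul_left (t : ℂ)).exp_left)

lemma exp_neg_mul_exp (u : A) (t : ℝ) :
    exp ((t : ℂ) • (-u)) * exp ((t : ℂ) • u) = 1 := by
  rw [← Matrix.exp_add_of_commute _ _ (((Commute.refl u).neg_left.smul_left (t : ℂ)).smul_right (t : ℂ))]
  simp

lemma exp_mul_exp_neg (u : A) (t : ℝ) :
    exp ((t : ℂ) • u) * exp ((t : ℂ) • (-u)) = 1 := by
  rw [← Matrix.exp_add_of_commute _ _ ((((Commute.refl u).neg_right).smul_left (t : ℂ)).smul_right (t : ℂ))]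
  simp

lemma key (u v w : A) (huv : ⁅u, v⁆ = w) (hwu : ⁅w, u⁆ = v) (α : ℝ) :
    exp ((α : ℂ) • u) * v =
      ((Real.cos α : ℂ) • v + (Real.sin α : ℂ) • w) * exp ((α : ℂ) • u) := by
  have huv' : u * v - v * u = w := by rw [← Ring.lie_def]; exact huv
  have hwu' : w * u - u * w = v := by rw [← Ring.lie_def]; exact hwu
  set c : ℝ → A := fun t => (Real.cos t : ℂ) • v + (Real.sin t : ℂ) • w with hc
  set F : ℝ → A := fun t => exp ((t : ℂ) • (-u)) * (c t * exp ((t : ℂ) • u)) with hF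
  have hder : ∀ t : ℝ, HasDerivAt F 0 t := by
    intro t
    have h1 := hasDerivAt_expReal (-u) t
    have h2 := hasDerivAt_expReal u t
    have hcos : HasDerivAt (fun s : ℝ => ((Real.cos s : ℂ))) ((-Real.sin t : ℝ) : ℂ) t :=
      (Real.hasDerivAt_cos t).ofReal_comp
    have hsin : HasDerivAt (fun s : ℝ => ((Real.sin s : ℂ))) ((Real.cos t : ℝ) : ℂ) t :=
      (Real.hasDerivAt_sin t).ofReal_comp
    have hcder : HasDerivAt c (((-Real.sin t : ℝ) : ℂ) • v + ((Real.cos t : ℝ) : ℂ) • w) t :=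
      (hcos.smul_const v).add (hsin.smul_const w)
    have hprod := h1.mul (hcder.mul h2)
    convert hprod using 1
    all_goals try rfl
    -- show 0 equals the derivative expression
    have hcm : c t * (exp ((t : ℂ) • u) * u) = (c t * u) * exp ((t : ℂ) • u) := by
      rw [exp_comm_self, mul_assoc]
    rw [hcm]
    have hbr : u * c t - c t * u = (Real.cos t : ℂ) • w - (Real.sin t : ℂ) • v := by
      simp only [hc, mul_add, add_mul, mul_smul_comm, smul_mul_assoc]
      rw [show ((Real.cos t : ℂ)) • (u * v) + (Real.sin t : ℂ) • (u * w) -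
            ((Real.cos t : ℂ) • (v * u) + (Real.sin t : ℂ) • (w * u)) =
          (Real.cos t : ℂ) • (u * v - v * u) - (Real.sin t : ℂ) • (w * u - u * w) by
        simp [smul_sub]; abel]
      rw [huv', hwu']
    have hkey0 : (((-Real.sin t : ℝ) : ℂ) • v + ((Real.cos t : ℝ) : ℂ) • w) + c t * u
        = u * c t := by
      have : (((-Real.sin t : ℝ) : ℂ) • v + ((Real.cos t : ℝ) : ℂ) • w)
          = u * c t - c t * u := by
        rw [hbr]; push_cast; rw [neg_smul]; abel
      rw [this]; abel
    have : exp ((t : ℂ) • (-u)) * (-u) * (c t * exp ((t : ℂ) • u)) +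
        exp ((t : ℂ) • (-u)) *
          ((((-Real.sin t : ℝ) : ℂ) • v + ((Real.cos t : ℝ) : ℂ) • w) * exp ((t : ℂ) • u) +
            c t * u * exp ((t : ℂ) • u))
        = exp ((t : ℂ) • (-u)) *
            (((((-Real.sin t : ℝ) : ℂ) • v + ((Real.cos t : ℝ) : ℂ) • w) + c t * u - u * c t) *
              exp ((t : ℂ) • u)) := by
      noncomm_ring
    rw [Pi.mul_apply]
    rw [this, hkey0]
    simp
  have hconst : F α = F 0 := by
    have hdiff : Differentiable ℝ F := fun t => (hder t).differentiableAt
    have hd0 : ∀ t, deriv F t = 0 := fun t => (hder t).deriv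
    exact is_const_of_deriv_eq_zero hdiff hd0 α 0
  have hF0 : F 0 = v := by
    simp [hF, hc, exp_zero]
  have hFα : exp ((α : ℂ) • (-u)) * (c α * exp ((α : ℂ) • u)) = v := by
    rw [← hF0, ← hconst]
  calc exp ((α : ℂ) • u) * v
      = exp ((α : ℂ) • u) * (exp ((α : ℂ) • (-u)) * (c α * exp ((α : ℂ) • u))) := by
        rw [hFα]
    _ = (exp ((α : ℂ) • u) * exp ((α : ℂ) • (-u))) * (c α * exp ((α : ℂ) • u)) := by
        rw [mul_assoc]
    _ = c α * exp ((α : ℂ) • u) := by rw [exp_mul_exp_neg]; simp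

end Su2ExpConjAux

end

/-- If `u, v, w` are 2×2 complex matrices with `⁅u,v⁆ = w`, `⁅v,w⁆ = u`,
`⁅w,u⁆ = v`, then for all real `α, β`:
`exp(α•u) * exp(β•v) = exp(β•(cos α • v + sin α • w)) * exp(α•u)`. -/
theorem su2_exp_conj (u v w : Matrix (Fin 2) (Fin 2) ℂ)
    (huv : ⁅u, v⁆ = w) (hvw : ⁅v, w⁆ = u) (hwu : ⁅w, u⁆ = v) (α β : ℝ) :
    NormedSpace.exp (α • u) * NormedSpace.exp (β • v) =
      NormedSpace.exp (β • (Real.cos α • v + Real.sin α • w)) *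
        NormedSpace.exp (α • u) := by
  classical
  letI := Matrix.linftyOpNormedAddCommGroup (α := ℂ) (m := Fin 2) (n := Fin 2)
  letI := Matrix.linftyOpNormedRing (α := ℂ) (n := Fin 2)
  letI := Matrix.linftyOpNormedAlgebra (α := ℂ) (R := ℂ) (n := Fin 2)
  have hkey := Su2ExpConjAux.key u v w huv hwu α
  -- convert real smul to complex smul
  have hsm : ∀ (t : ℝ) (x : Matrix (Fin 2) (Fin 2) ℂ), t • x = (t : ℂ) • x := by
    intro t x
    exact (Complex.coe_smul t x).symm
  set E := NormedSpace.exp ((α : ℂ) • u) with hE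
  set E' := NormedSpace.exp ((α : ℂ) • (-u)) with hE'
  have h1 : E * E' = 1 := Su2ExpConjAux.exp_mul_exp_neg u α
  have h2 : E' * E = 1 := Su2ExpConjAux.exp_neg_mul_exp u α
  set U : (Matrix (Fin 2) (Fin 2) ℂ)ˣ := ⟨E, E', h1, h2⟩ with hU
  set c : Matrix (Fin 2) (Fin 2) ℂ := (Real.cos α : ℂ) • v + (Real.sin α : ℂ) • w with hcdef
  have hconj : (U : Matrix (Fin 2) (Fin 2) ℂ) * ((β : ℂ) • v) * ((U⁻¹ : _ˣ) : _) =
      (β : ℂ) • c := by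
    show E * ((β : ℂ) • v) * E' = (β : ℂ) • c
    have : E * ((β : ℂ) • v) * E' = (β : ℂ) • (E * v * E') := by
      simp [mul_smul_comm, smul_mul_assoc]
    rw [this]
    congr 1
    have : E * v = c * E := hkey
    rw [this, mul_assoc, h1, mul_one]
  have hmain : NormedSpace.exp ((β : ℂ) • c) =
      (U : Matrix (Fin 2) (Fin 2) ℂ) * NormedSpace.exp ((β : ℂ) • v) * ((U⁻¹ : _ˣ) : _) := by
    rw [← hconj]
    exact NormedSpace.exp_units_conj U ((β : ℂ) • v)
  have hgoal : β • (Real.cos α • v + Real.sin α • w) = (β : ℂ) • c := by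
    rw [hsm β, hcdef]
    congr 1
  rw [hsm α u, hsm β v, hgoal, hmain]
  show E * NormedSpace.exp ((β : ℂ) • v) =
    E * NormedSpace.exp ((β : ℂ) • v) * E' * E
  rw [mul_assoc, h2, mul_one]
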